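/- Let D be the change-of-basis matrix on ℓ²(ℤ) associated to a sequence (a_l)_{l≥1}: D e_m = Σ_{l≥1} a_l e_{ml} for m ≥ 1, D e_{−m} = Σ_{l≥1} conj(a_l) e_{−ml} for m ≥ 1, and D e_0 = e_0. If Σ_{l≥1} |a_l| < ∞, then D is bounded on ℓ²(ℤ) with operator norm ‖D‖ ≤ max{1, Σ_{l=1}^∞ |a_l|}. -/

import Mathlib

open scoped ComplexConjugate

/-- The matrix of the Dirichlet-ring change-of-basis map `D` on ℓ²(ℤ)
associated with the coefficient sequence `(a_l)_{l ≥ 1}`. -/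
noncomputable def dirichletMatrix (a : ℕ → ℂ) : ℤ → ℤ → ℂ := fun k m =>
  if m = 0 then (if k = 0 then 1 else 0)
  else if 0 < m then (if 0 < k ∧ m ∣ k then a (k / m).toNat else 0)
  else (if k < 0 ∧ m ∣ k then conj (a (k / m).toNat) else 0)

/-- The support of a row of the Dirichlet matrix is contained in `Icc (-|k|) |k|`. -/
lemma dirichletMatrix_eq_zero_of_not_mem (a : ℕ → ℂ) (k : ℤ) {m : ℤ}
    (hm : m ∉ Finset.Icc (-|k|) |k|) : dirichletMatrix a k m = 0 := by
  by_contra h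
  apply hm
  rw [Finset.mem_Icc, ← abs_le]
  unfold dirichletMatrix at h
  split_ifs at h with h0 h1 h2 h3 h4
  · subst h0; subst h1; simp
  · exact absurd rfl h
  · have hd : |m| ∣ |k| := (abs_dvd _ _).2 ((dvd_abs _ _).2 h3.2)
    exact Int.le_of_dvd (abs_pos.2 h3.1.ne') hd
  · exact absurd rfl h
  · have hd : |m| ∣ |k| := (abs_dvd _ _).2 ((dvd_abs _ _).2 h4.2)
    exact Int.le_of_dvd (abs_pos.2 h4.1.ne) hd
  · exact absurd rfl h

lemma dirichletMatrix_ne_zero_pos (a : ℕ → ℂ) {k m : ℤ} (hk : 0 < k)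
    (h : dirichletMatrix a k m ≠ 0) : 0 < m ∧ m ∣ k := by
  unfold dirichletMatrix at h
  split_ifs at h with h0 h1 h2 h3 h4
  · exact absurd h1 hk.ne'
  · exact absurd rfl h
  · exact ⟨h2, h3.2⟩
  · exact absurd rfl h
  · exact absurd h4.1 (by omega)
  · exact absurd rfl h

lemma dirichletMatrix_ne_zero_neg (a : ℕ → ℂ) {k m : ℤ} (hk : k < 0)
    (h : dirichletMatrix a k m ≠ 0) : m < 0 ∧ m ∣ k := by
  unfold dirichletMatrix at h
  split_ifs at h with h0 h1 h2 h3 h4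
  · omega
  · exact absurd rfl h
  · exact absurd h3.1 (by omega)
  · exact absurd rfl h
  · exact ⟨by omega, h4.2⟩
  · exact absurd rfl h

lemma dirichletMatrix_pos_val (a : ℕ → ℂ) {k m : ℤ} (hk : 0 < k) (hm : 0 < m) (hd : m ∣ k) :
    dirichletMatrix a k m = a ((k / m).toNat) := by
  unfold dirichletMatrix
  rw [if_neg hm.ne', if_pos hm, if_pos ⟨hk, hd⟩]

lemma dirichletMatrix_neg_val (a : ℕ → ℂ) {k m : ℤ} (hk : k < 0) (hm : m < 0) (hd : m ∣ k) :
    dirichletMatrix a k m = conj (a ((k / m).toNat)) := by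
  unfold dirichletMatrix
  rw [if_neg hm.ne, if_neg (by omega), if_pos ⟨hk, hd⟩]

lemma sum_divisors_norm_le (a : ℕ → ℂ) (ha : Summable fun l : ℕ => ‖a (l + 1)‖) (n : ℕ) :
    ∑ d ∈ n.divisors, ‖a d‖ ≤ ∑' l : ℕ, ‖a (l + 1)‖ := by
  have hinj : Set.InjOn (· - 1) n.divisors := by
    intro x hx y hy hxy
    have hx1 := Nat.pos_of_mem_divisors hx
    have hy1 := Nat.pos_of_mem_divisors hy
    simp only at hxy; omega
  have h : ∑ d ∈ n.divisors, ‖a d‖ = ∑ j ∈ n.divisors.image (· - 1), ‖a (j + 1)‖ := by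
    rw [Finset.sum_image hinj]
    exact Finset.sum_congr rfl fun d hd => by
      have h1 := Nat.pos_of_mem_divisors hd
      have h2 : d - 1 + 1 = d := by omega
      rw [h2]
  rw [h]
  exact Summable.sum_le_tsum _ (fun _ _ => norm_nonneg _) ha

lemma dirichletMatrix_row_sum (a : ℕ → ℂ) (ha : Summable fun l : ℕ => ‖a (l + 1)‖) (k : ℤ) :
    ∑ m ∈ Finset.Icc (-|k|) |k|, ‖dirichletMatrix a k m‖ ≤
      max 1 (∑' l : ℕ, ‖a (l + 1)‖) := by
  rcases lt_trichotomy k 0 with hk | hk | hk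
  · -- k < 0
    set n : ℕ := (-k).toNat with hn
    have hnk : -(n : ℤ) = k := by omega
    set t : Finset ℤ := n.divisors.image (fun d : ℕ => -(d : ℤ)) with ht
    have hts : t ⊆ Finset.Icc (-|k|) |k| := by
      intro m hm
      simp only [ht, Finset.mem_image] at hm
      obtain ⟨d, hd, rfl⟩ := hm
      have h1 := Nat.pos_of_mem_divisors hd
      have h2 := Nat.le_of_dvd (by omega) (Nat.dvd_of_mem_divisors hd)
      rw [Finset.mem_Icc, abs_of_neg hk]
      omega
    have h1 : ∑ m ∈ Finset.Icc (-|k|) |k|, ‖dirichletMatrix a k m‖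
        = ∑ m ∈ t, ‖dirichletMatrix a k m‖ := by
      refine (Finset.sum_subset hts fun m _ hm => ?_).symm
      by_contra h
      have h2 := dirichletMatrix_ne_zero_neg a hk (fun h' => h (by rw [h']; simp))
      apply hm
      simp only [ht, Finset.mem_image]
      refine ⟨(-m).toNat, ?_, by omega⟩
      rw [Nat.mem_divisors]
      refine ⟨?_, by omega⟩
      have hd1 : (-m) ∣ (n : ℤ) := by
        have : (n : ℤ) = -k := by omega
        rw [this]
        exact (dvd_neg.mpr h2.2).neg_left
      have hd2 : ((-m).toNat : ℤ) ∣ (n : ℤ) := by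
        rwa [Int.toNat_of_nonneg (by omega : (0:ℤ) ≤ -m)]
      exact Int.natCast_dvd_natCast.mp hd2
    have h2 : ∑ m ∈ t, ‖dirichletMatrix a k m‖ = ∑ d ∈ n.divisors, ‖a (n / d)‖ := by
      rw [ht, Finset.sum_image (by intro x hx y hy hxy; simp only at hxy; omega)]
      refine Finset.sum_congr rfl fun d hd => ?_
      have h3 := Nat.pos_of_mem_divisors hd
      have h4 : ((d : ℤ)) ∣ (n : ℤ) := Int.natCast_dvd_natCast.mpr (Nat.dvd_of_mem_divisors hd)
      have h5 : (-(d:ℤ)) ∣ k := by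
        rw [← hnk]
        exact (dvd_neg.mpr h4).neg_left
      rw [dirichletMatrix_neg_val a hk (by omega) h5, RCLike.norm_conj]
      congr 2
      rw [← hnk, Int.ediv_neg, Int.neg_ediv_of_dvd h4, neg_neg, ← Int.natCast_ediv,
        Int.toNat_natCast]
    rw [h1, h2, Nat.sum_div_divisors n (fun d => ‖a d‖)]
    exact le_max_of_le_right (sum_divisors_norm_le a ha n)
  · -- k = 0
    subst hk
    simp only [abs_zero, neg_zero, Finset.Icc_self, Finset.sum_singleton]
    unfold dirichletMatrix
    simp
  · -- 0 < k
    set n : ℕ := k.toNat with hn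
    have hnk : (n : ℤ) = k := by omega
    set t : Finset ℤ := n.divisors.image (fun d : ℕ => (d : ℤ)) with ht
    have hts : t ⊆ Finset.Icc (-|k|) |k| := by
      intro m hm
      simp only [ht, Finset.mem_image] at hm
      obtain ⟨d, hd, rfl⟩ := hm
      have h1 := Nat.pos_of_mem_divisors hd
      have h2 := Nat.le_of_dvd (by omega) (Nat.dvd_of_mem_divisors hd)
      rw [Finset.mem_Icc, abs_of_pos hk]
      omega
    have h1 : ∑ m ∈ Finset.Icc (-|k|) |k|, ‖dirichletMatrix a k m‖
        = ∑ m ∈ t, ‖dirichletMatrix a k m‖ := by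
      refine (Finset.sum_subset hts fun m _ hm => ?_).symm
      by_contra h
      have h2 := dirichletMatrix_ne_zero_pos a hk (fun h' => h (by rw [h']; simp))
      apply hm
      simp only [ht, Finset.mem_image]
      refine ⟨m.toNat, ?_, by omega⟩
      rw [Nat.mem_divisors]
      refine ⟨?_, by omega⟩
      have hd2 : (m.toNat : ℤ) ∣ (n : ℤ) := by
        rw [Int.toNat_of_nonneg (by omega : (0:ℤ) ≤ m), hnk]
        exact h2.2
      exact Int.natCast_dvd_natCast.mp hd2
    have h2 : ∑ m ∈ t, ‖dirichletMatrix a k m‖ = ∑ d ∈ n.divisors, ‖a (n / d)‖ := by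
      rw [ht, Finset.sum_image (by intro x hx y hy hxy; simp only at hxy; omega)]
      refine Finset.sum_congr rfl fun d hd => ?_
      have h3 := Nat.pos_of_mem_divisors hd
      have h4 : ((d : ℤ)) ∣ (n : ℤ) := Int.natCast_dvd_natCast.mpr (Nat.dvd_of_mem_divisors hd)
      rw [dirichletMatrix_pos_val a hk (by omega) (by rw [← hnk]; exact h4)]
      congr 2
      rw [← hnk, ← Int.natCast_ediv, Int.toNat_natCast]
    rw [h1, h2, Nat.sum_div_divisors n (fun d => ‖a d‖)]
    exact le_max_of_le_right (sum_divisors_norm_le a ha n)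

lemma dirichletMatrix_ne_zero_mpos (a : ℕ → ℂ) {k m : ℤ} (hm : 0 < m)
    (h : dirichletMatrix a k m ≠ 0) : 0 < k ∧ m ∣ k := by
  unfold dirichletMatrix at h
  rw [if_neg hm.ne', if_pos hm] at h
  by_contra hc
  rw [if_neg hc] at h
  exact h rfl

lemma dirichletMatrix_ne_zero_mneg (a : ℕ → ℂ) {k m : ℤ} (hm : m < 0)
    (h : dirichletMatrix a k m ≠ 0) : k < 0 ∧ m ∣ k := by
  unfold dirichletMatrix at h
  rw [if_neg hm.ne, if_neg (by omega : ¬ (0:ℤ) < m)] at h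
  by_contra hc
  rw [if_neg hc] at h
  exact h rfl

lemma ofReal_norm_eq_coe_nnnorm {E : Type*} [SeminormedAddGroup E] (x : E) :
    ENNReal.ofReal ‖x‖ = (‖x‖₊ : ENNReal) := ENNReal.ofReal_eq_coe_nnreal _

open scoped ENNReal in
lemma dirichletMatrix_col_sum (a : ℕ → ℂ) (ha : Summable fun l : ℕ => ‖a (l + 1)‖) (m : ℤ) :
    ∑' k : ℤ, (‖dirichletMatrix a k m‖₊ : ℝ≥0∞) ≤
      ENNReal.ofReal (max 1 (∑' l : ℕ, ‖a (l + 1)‖)) := by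
  have hS : ∑' l : ℕ, (‖a (l + 1)‖₊ : ℝ≥0∞) = ENNReal.ofReal (∑' l : ℕ, ‖a (l + 1)‖) := by
    rw [ENNReal.ofReal_tsum_of_nonneg (fun _ => norm_nonneg _) ha]
    simp only [ofReal_norm_eq_coe_nnnorm]
  rcases lt_trichotomy m 0 with hm | hm | hm
  · -- m < 0
    set g : ℕ → ℤ := fun l => m * ((l : ℤ) + 1) with hg
    have hginj : Function.Injective g := by
      intro x y hxy
      simp only [hg] at hxy
      have := mul_left_cancel₀ hm.ne hxy
      omega
    have hsupp : Function.support (fun k : ℤ => (‖dirichletMatrix a k m‖₊ : ℝ≥0∞)) ⊆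
        Set.range g := by
      intro k hk
      have hD : dirichletMatrix a k m ≠ 0 := by
        intro h'; apply hk; simp [h']
      obtain ⟨hkneg, hdvd⟩ := dirichletMatrix_ne_zero_mneg a hm hD
      have hdvd' : (-m) ∣ (-k) := (dvd_neg.mpr hdvd).neg_left
      have hc : 0 < k / m := by
        have h1 : 0 < (-k) / (-m) := Int.ediv_pos_of_pos_of_dvd (by omega) (by omega) hdvd'
        rwa [Int.ediv_neg, Int.neg_ediv_of_dvd hdvd, neg_neg] at h1
      refine ⟨(k / m).toNat - 1, ?_⟩
      simp only [hg]
      have h2 : (((k / m).toNat - 1 : ℕ) : ℤ) + 1 = k / m := by omega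
      rw [h2]
      exact Int.mul_ediv_cancel' hdvd
    calc ∑' k : ℤ, (‖dirichletMatrix a k m‖₊ : ℝ≥0∞)
        = ∑' l : ℕ, (‖dirichletMatrix a (g l) m‖₊ : ℝ≥0∞) := (hginj.tsum_eq hsupp).symm
      _ = ∑' l : ℕ, (‖a (l + 1)‖₊ : ℝ≥0∞) := by
          refine tsum_congr fun l => ?_
          have hk : g l < 0 := by
            simp only [hg]
            have : (0:ℤ) < (l : ℤ) + 1 := by omega
            exact mul_neg_of_neg_of_pos hm this
          have hdvd : m ∣ g l := ⟨(l : ℤ) + 1, rfl⟩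
          rw [dirichletMatrix_neg_val a hk hm hdvd, RCLike.nnnorm_conj]
          have h3 : g l / m = (l : ℤ) + 1 := by
            simp only [hg]; exact Int.mul_ediv_cancel_left _ hm.ne
          have h4 : ((l : ℤ) + 1).toNat = l + 1 := by omega
          rw [h3, h4]
      _ = ENNReal.ofReal (∑' l : ℕ, ‖a (l + 1)‖) := hS
      _ ≤ _ := ENNReal.ofReal_le_ofReal (le_max_right _ _)
  · -- m = 0
    subst hm
    have h0 : ∀ k : ℤ, k ≠ 0 → (‖dirichletMatrix a k 0‖₊ : ℝ≥0∞) = 0 := by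
      intro k hk
      unfold dirichletMatrix
      simp [hk]
    rw [tsum_eq_single 0 h0]
    have : dirichletMatrix a 0 0 = 1 := by unfold dirichletMatrix; simp
    rw [this]
    simp only [nnnorm_one, ENNReal.coe_one]
    exact ENNReal.one_le_ofReal.mpr (le_max_left _ _)
  · -- 0 < m
    set g : ℕ → ℤ := fun l => m * ((l : ℤ) + 1) with hg
    have hginj : Function.Injective g := by
      intro x y hxy
      simp only [hg] at hxy
      have := mul_left_cancel₀ hm.ne' hxy
      omega
    have hsupp : Function.support (fun k : ℤ => (‖dirichletMatrix a k m‖₊ : ℝ≥0∞)) ⊆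
        Set.range g := by
      intro k hk
      have hD : dirichletMatrix a k m ≠ 0 := by
        intro h'; apply hk; simp [h']
      obtain ⟨hkpos, hdvd⟩ := dirichletMatrix_ne_zero_mpos a hm hD
      have hc : 0 < k / m := Int.ediv_pos_of_pos_of_dvd hkpos hm.le hdvd
      refine ⟨(k / m).toNat - 1, ?_⟩
      simp only [hg]
      have h2 : (((k / m).toNat - 1 : ℕ) : ℤ) + 1 = k / m := by omega
      rw [h2]
      exact Int.mul_ediv_cancel' hdvd
    calc ∑' k : ℤ, (‖dirichletMatrix a k m‖₊ : ℝ≥0∞)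
        = ∑' l : ℕ, (‖dirichletMatrix a (g l) m‖₊ : ℝ≥0∞) := (hginj.tsum_eq hsupp).symm
      _ = ∑' l : ℕ, (‖a (l + 1)‖₊ : ℝ≥0∞) := by
          refine tsum_congr fun l => ?_
          have hk : 0 < g l := by
            simp only [hg]
            have : (0:ℤ) < (l : ℤ) + 1 := by omega
            exact mul_pos hm this
          have hdvd : m ∣ g l := ⟨(l : ℤ) + 1, rfl⟩
          rw [dirichletMatrix_pos_val a hk hm hdvd]
          have h3 : g l / m = (l : ℤ) + 1 := by
            simp only [hg]; exact Int.mul_ediv_cancel_left _ hm.ne'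
          have h4 : ((l : ℤ) + 1).toNat = l + 1 := by omega
          rw [h3, h4]
      _ = ENNReal.ofReal (∑' l : ℕ, ‖a (l + 1)‖) := hS
      _ ≤ _ := ENNReal.ofReal_le_ofReal (le_max_right _ _)

open scoped NNReal ENNReal

theorem dirichlet_matrix_operator_norm_bound (a : ℕ → ℂ)
    (ha : Summable fun l : ℕ => ‖a (l + 1)‖) :
    ∀ x : ℤ → ℂ, Summable (fun k : ℤ => ‖x k‖ ^ 2) →
      (∀ k : ℤ, Summable fun m : ℤ => dirichletMatrix a k m * x m) ∧
      Summable (fun k : ℤ => ‖∑' m : ℤ, dirichletMatrix a k m * x m‖ ^ 2) ∧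
      (∑' k : ℤ, ‖∑' m : ℤ, dirichletMatrix a k m * x m‖ ^ 2) ≤
        (max 1 (∑' l : ℕ, ‖a (l + 1)‖)) ^ 2 * ∑' k : ℤ, ‖x k‖ ^ 2 := by
  intro x hx
  set C : ℝ := max 1 (∑' l : ℕ, ‖a (l + 1)‖) with hCdef
  have hC0 : (0:ℝ) ≤ C := le_trans zero_le_one (le_max_left _ _)
  have hzero : ∀ k : ℤ, ∀ m ∉ Finset.Icc (-|k|) |k|, dirichletMatrix a k m * x m = 0 :=
    fun k m hm => by rw [dirichletMatrix_eq_zero_of_not_mem a k hm, zero_mul]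
  have hsum1 : ∀ k : ℤ, Summable fun m : ℤ => dirichletMatrix a k m * x m :=
    fun k => summable_of_ne_finset_zero (hzero k)
  -- pointwise Cauchy–Schwarz (Schur) estimate
  have key : ∀ k : ℤ, (‖∑' m : ℤ, dirichletMatrix a k m * x m‖₊ : ℝ≥0∞) ^ 2 ≤
      ENNReal.ofReal C * ∑' m : ℤ, (‖dirichletMatrix a k m‖₊ : ℝ≥0∞) * (‖x m‖₊ : ℝ≥0∞) ^ 2 := by
    intro k
    set s := Finset.Icc (-|k|) |k| with hs
    have h1 : ∑' m : ℤ, dirichletMatrix a k m * x m = ∑ m ∈ s, dirichletMatrix a k m * x m :=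
      tsum_eq_sum (hzero k)
    have h2 : ‖∑ m ∈ s, dirichletMatrix a k m * x m‖ ^ 2 ≤
        C * ∑ m ∈ s, ‖dirichletMatrix a k m‖ * ‖x m‖ ^ 2 := by
      have hcs := Finset.sum_mul_sq_le_sq_mul_sq s (fun m => Real.sqrt ‖dirichletMatrix a k m‖)
        (fun m => Real.sqrt ‖dirichletMatrix a k m‖ * ‖x m‖)
      have e1 : ∀ m : ℤ, Real.sqrt ‖dirichletMatrix a k m‖ *
          (Real.sqrt ‖dirichletMatrix a k m‖ * ‖x m‖) = ‖dirichletMatrix a k m‖ * ‖x m‖ := by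
        intro m
        rw [← mul_assoc, Real.mul_self_sqrt (norm_nonneg _)]
      have e2 : ∀ m : ℤ, Real.sqrt ‖dirichletMatrix a k m‖ ^ 2 = ‖dirichletMatrix a k m‖ :=
        fun m => Real.sq_sqrt (norm_nonneg _)
      have e3 : ∀ m : ℤ, (Real.sqrt ‖dirichletMatrix a k m‖ * ‖x m‖) ^ 2 =
          ‖dirichletMatrix a k m‖ * ‖x m‖ ^ 2 := by
        intro m; rw [mul_pow, Real.sq_sqrt (norm_nonneg _)]
      simp only [e1, e2, e3] at hcs
      calc ‖∑ m ∈ s, dirichletMatrix a k m * x m‖ ^ 2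
          ≤ (∑ m ∈ s, ‖dirichletMatrix a k m‖ * ‖x m‖) ^ 2 := by
            apply pow_le_pow_left₀ (norm_nonneg _)
            refine (norm_sum_le _ _).trans (le_of_eq ?_)
            exact Finset.sum_congr rfl fun m _ => norm_mul _ _
        _ ≤ (∑ m ∈ s, ‖dirichletMatrix a k m‖) *
              ∑ m ∈ s, ‖dirichletMatrix a k m‖ * ‖x m‖ ^ 2 := hcs
        _ ≤ C * ∑ m ∈ s, ‖dirichletMatrix a k m‖ * ‖x m‖ ^ 2 := by
            apply mul_le_mul_of_nonneg_right (dirichletMatrix_row_sum a ha k)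
            exact Finset.sum_nonneg fun m _ => mul_nonneg (norm_nonneg _) (sq_nonneg _)
    calc (‖∑' m : ℤ, dirichletMatrix a k m * x m‖₊ : ℝ≥0∞) ^ 2
        = ENNReal.ofReal (‖∑ m ∈ s, dirichletMatrix a k m * x m‖ ^ 2) := by
          rw [h1, ENNReal.ofReal_pow (norm_nonneg _), ofReal_norm_eq_coe_nnnorm]
      _ ≤ ENNReal.ofReal (C * ∑ m ∈ s, ‖dirichletMatrix a k m‖ * ‖x m‖ ^ 2) :=
          ENNReal.ofReal_le_ofReal h2
      _ = ENNReal.ofReal C * ∑ m ∈ s, ENNReal.ofReal (‖dirichletMatrix a k m‖ * ‖x m‖ ^ 2) := by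
          rw [ENNReal.ofReal_mul hC0, ENNReal.ofReal_sum_of_nonneg
            (fun m _ => mul_nonneg (norm_nonneg _) (sq_nonneg _))]
      _ = ENNReal.ofReal C *
            ∑ m ∈ s, (‖dirichletMatrix a k m‖₊ : ℝ≥0∞) * (‖x m‖₊ : ℝ≥0∞) ^ 2 := by
          congr 1
          refine Finset.sum_congr rfl fun m _ => ?_
          rw [ENNReal.ofReal_mul (norm_nonneg _), ENNReal.ofReal_pow (norm_nonneg _),
            ofReal_norm_eq_coe_nnnorm, ofReal_norm_eq_coe_nnnorm]
      _ ≤ ENNReal.ofReal C *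
            ∑' m : ℤ, (‖dirichletMatrix a k m‖₊ : ℝ≥0∞) * (‖x m‖₊ : ℝ≥0∞) ^ 2 :=
          mul_le_mul_right (ENNReal.sum_le_tsum s) _
  have hX : ∑' m : ℤ, ((‖x m‖₊ : ℝ≥0∞)) ^ 2 = ENNReal.ofReal (∑' k : ℤ, ‖x k‖ ^ 2) := by
    rw [ENNReal.ofReal_tsum_of_nonneg (fun _ => sq_nonneg _) hx]
    refine tsum_congr fun m => ?_
    rw [ENNReal.ofReal_pow (norm_nonneg _), ofReal_norm_eq_coe_nnnorm]
  have hT : ∑' k : ℤ, (‖∑' m : ℤ, dirichletMatrix a k m * x m‖₊ : ℝ≥0∞) ^ 2 ≤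
      ENNReal.ofReal (C ^ 2 * ∑' k : ℤ, ‖x k‖ ^ 2) := by
    calc ∑' k : ℤ, (‖∑' m : ℤ, dirichletMatrix a k m * x m‖₊ : ℝ≥0∞) ^ 2
        ≤ ∑' k : ℤ, ENNReal.ofReal C *
            ∑' m : ℤ, (‖dirichletMatrix a k m‖₊ : ℝ≥0∞) * (‖x m‖₊ : ℝ≥0∞) ^ 2 :=
          ENNReal.tsum_le_tsum key
      _ = ENNReal.ofReal C * ∑' k : ℤ, ∑' m : ℤ,
            (‖dirichletMatrix a k m‖₊ : ℝ≥0∞) * (‖x m‖₊ : ℝ≥0∞) ^ 2 := ENNReal.tsum_mul_left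
      _ = ENNReal.ofReal C * ∑' m : ℤ, ∑' k : ℤ,
            (‖dirichletMatrix a k m‖₊ : ℝ≥0∞) * (‖x m‖₊ : ℝ≥0∞) ^ 2 := by
          rw [ENNReal.tsum_comm]
      _ = ENNReal.ofReal C * ∑' m : ℤ,
            (∑' k : ℤ, (‖dirichletMatrix a k m‖₊ : ℝ≥0∞)) * (‖x m‖₊ : ℝ≥0∞) ^ 2 := by
          congr 1
          exact tsum_congr fun m => ENNReal.tsum_mul_right
      _ ≤ ENNReal.ofReal C * ∑' m : ℤ, ENNReal.ofReal C * (‖x m‖₊ : ℝ≥0∞) ^ 2 := by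
          refine mul_le_mul_right (ENNReal.tsum_le_tsum fun m => ?_) _
          exact mul_le_mul_left (dirichletMatrix_col_sum a ha m) _
      _ = ENNReal.ofReal C * (ENNReal.ofReal C * ∑' m : ℤ, (‖x m‖₊ : ℝ≥0∞) ^ 2) := by
          rw [ENNReal.tsum_mul_left]
      _ = ENNReal.ofReal (C ^ 2 * ∑' k : ℤ, ‖x k‖ ^ 2) := by
          rw [hX, ← mul_assoc, ← ENNReal.ofReal_mul hC0, ← sq,
            ← ENNReal.ofReal_mul (sq_nonneg C)]
  -- convert the ℝ≥0∞ estimate back to ℝ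
  have hcoe : ∀ k : ℤ, (‖∑' m : ℤ, dirichletMatrix a k m * x m‖₊ : ℝ≥0∞) ^ 2 =
      ((‖∑' m : ℤ, dirichletMatrix a k m * x m‖₊ ^ 2 : ℝ≥0) : ℝ≥0∞) := by
    intro k; rw [ENNReal.coe_pow]
  have hne : ∑' k : ℤ, ((‖∑' m : ℤ, dirichletMatrix a k m * x m‖₊ ^ 2 : ℝ≥0) : ℝ≥0∞) ≠ ⊤ := by
    rw [← tsum_congr hcoe]
    exact ne_top_of_le_ne_top ENNReal.ofReal_ne_top hT
  have hsummable2 : Summable fun k : ℤ => (‖∑' m : ℤ, dirichletMatrix a k m * x m‖₊ ^ 2 : ℝ≥0) :=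
    ENNReal.tsum_coe_ne_top_iff_summable.mp hne
  have hnn : ∀ k : ℤ, ‖∑' m : ℤ, dirichletMatrix a k m * x m‖ ^ 2 =
      ((‖∑' m : ℤ, dirichletMatrix a k m * x m‖₊ ^ 2 : ℝ≥0) : ℝ) := by
    intro k
    rw [NNReal.coe_pow, coe_nnnorm]
  have hsumR : Summable (fun k : ℤ => ‖∑' m : ℤ, dirichletMatrix a k m * x m‖ ^ 2) := by
    rw [funext hnn]
    exact NNReal.summable_coe.mpr hsummable2
  refine ⟨hsum1, hsumR, ?_⟩
  have hXnn : (0:ℝ) ≤ ∑' k : ℤ, ‖x k‖ ^ 2 := tsum_nonneg fun _ => sq_nonneg _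
  have hfinal := ENNReal.toReal_mono ENNReal.ofReal_ne_top hT
  rw [ENNReal.toReal_ofReal (mul_nonneg (sq_nonneg C) hXnn)] at hfinal
  have heq : (∑' k : ℤ, (‖∑' m : ℤ, dirichletMatrix a k m * x m‖₊ : ℝ≥0∞) ^ 2).toReal =
      ∑' k : ℤ, ‖∑' m : ℤ, dirichletMatrix a k m * x m‖ ^ 2 := by
    rw [tsum_congr hcoe, ← ENNReal.coe_tsum hsummable2, ENNReal.coe_toReal, NNReal.coe_tsum]
    exact (tsum_congr hnn).symm
  rw [heq] at hfinal
  exact hfinal
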